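/- There is a bijection between permutations of {1,...,n} and labeled northeastern lattice paths with edges a₁,...,a_n and positive integer labels e₁,...,e_n satisfying: (1) a₁ is horizontal and e₁ = 1; (2) if a_i and a_{i+1} are parallel then e_i ≥ e_{i+1}; (3) if a_i and a_{i+1} are perpendicular then e_i + e_{i+1} ≤ i+1. Under this bijection, permutations with exactly k descents correspond to paths with exactly k vertical edges. -/

import Mathlib

open Finset

/-- The value of the permutation `p` at (0-indexed) position `i`, as a natural number. -/
def permVal (n : ℕ) (p : Equiv.Perm (Fin n)) (i : ℕ) : ℕ :=
  if h : i < n then (p ⟨i, h⟩ : ℕ) else 0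

/-- `p` changes direction at 0-indexed interior position `i` (peak or valley). -/
def dirChange (n : ℕ) (p : Equiv.Perm (Fin n)) (i : ℕ) : Prop :=
  (permVal n p (i-1) < permVal n p i ∧ permVal n p (i+1) < permVal n p i) ∨
  (permVal n p i < permVal n p (i-1) ∧ permVal n p i < permVal n p (i+1))

instance (n : ℕ) (p : Equiv.Perm (Fin n)) : DecidablePred (dirChange n p) := fun i => by
  unfold dirChange; infer_instance

/-- Number of runs of a permutation: one more than the number of interior direction changes. -/
def numRuns (n : ℕ) (p : Equiv.Perm (Fin n)) : ℕ :=
  ((Finset.Ico 1 (n-1)).filter (dirChange n p)).card + 1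

/-- `R n k` is the number of permutations of `{1,...,n}` with exactly `k` runs. -/
def R (n k : ℕ) : ℕ :=
  (Finset.univ.filter (fun p : Equiv.Perm (Fin n) => numRuns n p = k)).card

/-- Number of descents of a permutation. -/
def numDescents (n : ℕ) (p : Equiv.Perm (Fin n)) : ℕ :=
  ((Finset.range (n-1)).filter (fun i => permVal n p (i+1) < permVal n p i)).card

/-- `A n k`: Eulerian numbers, counting permutations with `k` descents. -/
def A (n k : ℕ) : ℕ :=
  (Finset.univ.filter (fun p : Equiv.Perm (Fin n) => numDescents n p = k)).card

/-- The run-generating polynomial `R_n(x) = Σ_k R(n,k) x^k`. -/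
noncomputable def Rpoly (n : ℕ) : Polynomial ℤ :=
  ∑ k ∈ Finset.range n, Polynomial.C ((R n k : ℤ)) * Polynomial.X ^ k

/-- `p` is `j`-half-ascending: `p_{n+1-2i} < p_{n+2-2i}` (1-indexed) for all `1 ≤ i ≤ j`. -/
def HalfAscJ (n j : ℕ) (p : Equiv.Perm (Fin n)) : Prop :=
  ∀ i ∈ Finset.Icc 1 j, permVal n p (n - 2*i) < permVal n p (n + 1 - 2*i)

instance (n j : ℕ) : DecidablePred (HalfAscJ n j) := fun p => by
  unfold HalfAscJ; infer_instance

/-- For `n` even: `p` is half-ascending if `p_{2i-1} < p_{2i}` (1-indexed) for `1 ≤ i ≤ n/2`. -/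
def HalfAsc (n : ℕ) (p : Equiv.Perm (Fin n)) : Prop :=
  ∀ i ∈ Finset.range (n/2), permVal n p (2*i) < permVal n p (2*i+1)

instance (n : ℕ) : DecidablePred (HalfAsc n) := fun p => by
  unfold HalfAsc; infer_instance

/-- `U n k`: number of half-ascending permutations with exactly `k` descents. -/
def U (n k : ℕ) : ℕ :=
  (Finset.univ.filter (fun p : Equiv.Perm (Fin n) =>
    HalfAsc n p ∧ numDescents n p = k)).card

/-- Number of runs of the prefix `p_1, ..., p_L` (1-indexed). -/
def prefixRuns (n L : ℕ) (p : Equiv.Perm (Fin n)) : ℕ :=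
  ((Finset.Ico 1 (L-1)).filter (dirChange n p)).card + 1

/-- Number of descents of the suffix starting at 0-indexed position `a`. -/
def suffixDescents (n a : ℕ) (p : Equiv.Perm (Fin n)) : ℕ :=
  ((Finset.Ico a (n-1)).filter (fun i => permVal n p (i+1) < permVal n p i)).card

/-- `t_j(p) = r_j(p) + s_j(p)`: runs of the prefix `p_1..p_{n-2j}` plus descents of the
suffix `p_{n-2j}..p_n`. -/
def tstat (n j : ℕ) (p : Equiv.Perm (Fin n)) : ℕ :=
  prefixRuns n (n - 2*j) p + suffixDescents n (n - 2*j - 1) p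

/-- `R_{n,j}(x) = Σ_p x^{t_j(p)}` over `j`-half-ascending permutations `p`. -/
noncomputable def RpolyJ (n j : ℕ) : Polynomial ℤ :=
  ∑ p ∈ Finset.univ.filter (HalfAscJ n j), Polynomial.X ^ (tstat n j p)

/-- A labeled northeastern lattice path with `n` edges, encoded as a function assigning to the
`i`-th edge (0-indexed; the paper's edge `a_{i+1}`) a direction (`true` = vertical) and a label.
Conditions (1)-(3) of the paper. -/
def IsLPath (n : ℕ) (f : Fin n → Bool × ℕ) : Prop :=
  (∀ i : Fin n, 1 ≤ (f i).2) ∧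
  (∀ h : 0 < n, (f ⟨0, h⟩).1 = false ∧ (f ⟨0, h⟩).2 = 1) ∧
  (∀ i : ℕ, (h : i + 1 < n) →
    ((f ⟨i, Nat.lt_of_succ_lt h⟩).1 = (f ⟨i+1, h⟩).1 →
      (f ⟨i+1, h⟩).2 ≤ (f ⟨i, Nat.lt_of_succ_lt h⟩).2) ∧
    ((f ⟨i, Nat.lt_of_succ_lt h⟩).1 ≠ (f ⟨i+1, h⟩).1 →
      (f ⟨i, Nat.lt_of_succ_lt h⟩).2 + (f ⟨i+1, h⟩).2 ≤ i + 2))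

/-- The number of vertical edges of a labeled lattice path. -/
def vertCount (n : ℕ) (f : Fin n → Bool × ℕ) : ℕ :=
  (Finset.univ.filter (fun i : Fin n => (f i).1 = true)).card


variable {n : ℕ}

/-- 1-indexed rank of `p i` among `p 0, ..., p i`. -/
def rk (p : Equiv.Perm (Fin n)) (i : Fin n) : ℕ :=
  (Finset.univ.filter (fun j => j ≤ i ∧ p j ≤ p i)).card

lemma rk_pos (p : Equiv.Perm (Fin n)) (i : Fin n) : 1 ≤ rk p i := by
  have : i ∈ Finset.univ.filter (fun j => j ≤ i ∧ p j ≤ p i) := by simp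
  exact Finset.card_pos.2 ⟨i, this⟩ 

lemma rk_le (p : Equiv.Perm (Fin n)) (i : Fin n) : rk p i ≤ i.val + 1 := by
  have h : (Finset.univ.filter (fun j => j ≤ i ∧ p j ≤ p i)) ⊆ Finset.Iic i := by
    intro j hj; simp at hj ⊢; exact hj.1
  simpa [rk, Fin.card_Iic] using Finset.card_le_card h

lemma descent_iff (p : Equiv.Perm (Fin n)) (a b : Fin n) (hab : b.val = a.val + 1) :
    p b < p a ↔ rk p b ≤ rk p a := by
  have hlt : a < b := by rw [Fin.lt_def, hab]; omega
  have hne : p a ≠ p b := fun h => absurd (p.injective h) hlt.ne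
  set A := Finset.univ.filter (fun j => j ≤ a ∧ p j ≤ p a) with hA
  set B := Finset.univ.filter (fun j => j ≤ b ∧ p j ≤ p b) with hB
  have haA : a ∈ A := by simp [hA]
  have hbB : b ∈ B := by simp [hB]
  constructor
  · intro hd
    have hsub : B.erase b ⊆ A.erase a := by
      intro k hk
      simp only [Finset.mem_erase, hB, hA, Finset.mem_filter, Finset.mem_univ, true_and] at hk ⊢
      obtain ⟨hkb, hk1, hk2⟩ := hk
      have hka : k ≤ a := by
        rw [Fin.le_def] at hk1 ⊢
        have := Fin.val_ne_of_ne hkb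
        omega
      refine ⟨?_, hka, hk2.trans hd.le⟩
      rintro rfl
      exact absurd hk2 (not_le.2 hd)
    calc rk p b = (B.erase b).card + 1 := by rw [show rk p b = B.card from rfl, Finset.card_erase_add_one hbB]
    _ ≤ (A.erase a).card + 1 := Nat.add_le_add_right (Finset.card_le_card hsub) 1
    _ = rk p a := by rw [show rk p a = A.card from rfl, Finset.card_erase_add_one haA]
  · intro hle
    by_contra hnd
    have hd : p a < p b := lt_of_le_of_ne (not_lt.1 hnd) hne
    have hsub : A ⊆ B.erase b := by
      intro k hk
      simp only [Finset.mem_erase, hA, hB, Finset.mem_filter, Finset.mem_univ, true_and] at hk ⊢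
      obtain ⟨hk1, hk2⟩ := hk
      exact ⟨fun h => absurd (h ▸ hk1) (not_le.2 hlt), hk1.trans hlt.le, hk2.trans hd.le⟩
    have : rk p a + 1 ≤ rk p b := by
      calc rk p a + 1 ≤ (B.erase b).card + 1 := Nat.add_le_add_right (Finset.card_le_card hsub) 1
      _ = rk p b := by rw [show rk p b = B.card from rfl, Finset.card_erase_add_one hbB]
    omega

lemma cmp_lemma (p : Equiv.Perm (Fin n)) (i j : Fin n) (hj : j < i) :
    p j < p i ↔ (Finset.univ.filter (fun k => k < i ∧ p k ≤ p j)).card < rk p i := by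
  have hne : p j ≠ p i := fun h => absurd (p.injective h) hj.ne
  set L := Finset.univ.filter (fun k => k < i ∧ p k ≤ p j) with hL
  set A := Finset.univ.filter (fun k => k ≤ i ∧ p k ≤ p i) with hA
  have hiA : i ∈ A := by simp [hA]
  have hjL : j ∈ L := by simp [hL, hj]
  constructor
  · intro hd
    have hsub : L ⊆ A.erase i := by
      intro k hk
      simp only [Finset.mem_erase, hL, hA, Finset.mem_filter, Finset.mem_univ, true_and] at hk ⊢
      exact ⟨hk.1.ne, hk.1.le, hk.2.trans hd.le⟩
    calc L.card ≤ (A.erase i).card := Finset.card_le_card hsub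
    _ < A.card := Finset.card_erase_lt_of_mem hiA
  · intro hlt
    by_contra hnd
    have hd : p i < p j := lt_of_le_of_ne (not_lt.1 hnd) (Ne.symm hne)
    have hsub : A.erase i ⊆ L.erase j := by
      intro k hk
      simp only [Finset.mem_erase, hL, hA, Finset.mem_filter, Finset.mem_univ, true_and] at hk ⊢
      obtain ⟨hki, hk1, hk2⟩ := hk
      refine ⟨?_, lt_of_le_of_ne hk1 hki, hk2.trans hd.le⟩
      rintro rfl
      exact absurd (hk2.trans_lt hd) (lt_irrefl _)
    have : A.card ≤ L.card := by
      calc A.card = (A.erase i).card + 1 := (Finset.card_erase_add_one hiA).symm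
      _ ≤ (L.erase j).card + 1 := Nat.add_le_add_right (Finset.card_le_card hsub) 1
      _ = L.card := Finset.card_erase_add_one hjL
    have : rk p i ≤ L.card := this
    omega

lemma rk_injective : Function.Injective (fun p : Equiv.Perm (Fin n) => rk p) := by
  intro p p' h
  have h' : ∀ i, rk p i = rk p' i := fun i => congrFun h i
  -- step 1: pairwise comparisons agree
  have key : ∀ m : ℕ, ∀ i : Fin n, i.val = m → ∀ j : Fin n, j < i →
      (p j < p i ↔ p' j < p' i) := by
    intro m
    induction m using Nat.strong_induction_on with
    | _ m IH =>
      intro i him j hj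
      have hsets : (Finset.univ.filter (fun k => k < i ∧ p k ≤ p j)) =
          (Finset.univ.filter (fun k => k < i ∧ p' k ≤ p' j)) := by
        ext k
        simp only [Finset.mem_filter, Finset.mem_univ, true_and, and_congr_right_iff]
        intro hki
        rcases lt_trichotomy k j with hkj | rfl | hjk
        · have := IH j.val (him ▸ hj) j rfl k hkj
          constructor
          · intro hle; exact (this.1 (lt_of_le_of_ne hle
              (fun hh => absurd (p.injective hh) hkj.ne))).le
          · intro hle; exact (this.2 (lt_of_le_of_ne hle
              (fun hh => absurd (p'.injective hh) hkj.ne))).le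
        · simp
        · have := IH k.val (him ▸ hki) k rfl j hjk
          rw [← not_lt, ← not_lt (a := p' j), this]
      rw [cmp_lemma p i j hj, cmp_lemma p' i j hj, hsets, h' i]
  have key2 : ∀ j k : Fin n, p j < p k ↔ p' j < p' k := by
    intro j k
    rcases lt_trichotomy j k with hjk | rfl | hkj
    · exact key k.val k rfl j hjk
    · simp
    · rw [← not_le, ← not_le (a := p' k)]
      constructor
      · intro hh hc
        exact hh ((key j.val j rfl k hkj).2
          (lt_of_le_of_ne hc (fun e => absurd (p'.injective e) hkj.ne))).le
      · intro hh hc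
        exact hh ((key j.val j rfl k hkj).1
          (lt_of_le_of_ne hc (fun e => absurd (p.injective e) hkj.ne))).le
  -- step 2: p' ∘ p⁻¹ is strictly monotone, hence equals id
  have hsm : StrictMono (fun x => p' (p.symm x)) := by
    intro x y hxy
    have : p (p.symm x) < p (p.symm y) := by simpa using hxy
    exact (key2 _ _).1 this
  have hid : StrictMono (id : Fin n → Fin n) := strictMono_id
  have hr : Set.range (fun x => p' (p.symm x)) = Set.range (id : Fin n → Fin n) := by
    have : Function.Surjective (fun x => p' (p.symm x)) :=
      (Equiv.surjective p').comp (Equiv.surjective p.symm)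
    rw [Set.range_id, Set.range_eq_univ.2 this]
  haveI : WellFoundedLT (Fin n) := inferInstance
  have heq := (StrictMono.range_inj (β := Fin n) (γ := Fin n) hsm hid).1 hr
  ext x
  have := congrFun heq (p x)
  simp only [Equiv.symm_apply_apply, id_eq] at this
  exact congrArg Fin.val this.symm

/-- The rank code of a permutation, 0-indexed. -/
def codeMap (p : Equiv.Perm (Fin n)) : ∀ i : Fin n, Fin (i.val + 1) :=
  fun i => ⟨rk p i - 1, by have h1 := rk_pos p i; have h2 := rk_le p i; omega⟩

lemma codeMap_injective : Function.Injective (codeMap (n := n)) := by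
  intro p p' h
  apply rk_injective
  funext i
  show rk p i = rk p' i
  have h1 := rk_pos p i
  have h2 := rk_pos p' i
  have hv : rk p i - 1 = rk p' i - 1 := congrArg Fin.val (congrFun h i)
  omega

lemma codeMap_bijective : Function.Bijective (codeMap (n := n)) := by
  rw [Fintype.bijective_iff_injective_and_card]
  refine ⟨codeMap_injective, ?_⟩
  rw [Fintype.card_perm, Fintype.card_pi]
  simp only [Fintype.card_fin]
  rw [show (∏ i : Fin n, (i.val + 1)) = ∏ x ∈ Finset.range n, (x + 1) from
    Fin.prod_univ_eq_prod_range _ n]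
  rw [Finset.prod_range_add_one_eq_factorial]

/-- Convert a rank code into a labeled lattice path. -/
def toPath (q : ∀ i : Fin n, Fin (i.val + 1)) (i : Fin n) : Bool × ℕ :=
  if h : i.val = 0 then (false, 1)
  else
    if (q i).val ≤ (q ⟨i.val - 1, Nat.lt_of_le_of_lt (Nat.sub_le _ _) i.isLt⟩).val
    then (true, (q i).val + 1)
    else (false, i.val + 1 - (q i).val)

lemma toPath_zero (q : ∀ i : Fin n, Fin (i.val + 1)) (h : 0 < n) :
    toPath q ⟨0, h⟩ = (false, 1) := by simp [toPath]

lemma toPath_succ (q : ∀ i : Fin n, Fin (i.val + 1)) (i : ℕ) (h : i + 1 < n) :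
    toPath q ⟨i+1, h⟩ =
      if (q ⟨i+1, h⟩).val ≤ (q ⟨i, Nat.lt_of_succ_lt h⟩).val
      then (true, (q ⟨i+1, h⟩).val + 1)
      else (false, i + 2 - (q ⟨i+1, h⟩).val) := by
  simp only [toPath, Nat.succ_ne_zero, dite_false, Nat.add_sub_cancel]
  rfl

lemma toPath_snd (q : ∀ i : Fin n, Fin (i.val + 1)) (i : Fin n) :
    (toPath q i).2 = if (toPath q i).1 then (q i).val + 1 else i.val + 1 - (q i).val := by
  rcases i with ⟨iv, hiv⟩
  match iv with
  | 0 =>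
    rw [toPath_zero]
    have : (q ⟨0, hiv⟩).val = 0 := Nat.le_zero.1 (Fin.is_le _)
    simp [this]
  | m + 1 =>
    rw [toPath_succ]
    split <;> simp

lemma toPath_fst_succ (q : ∀ i : Fin n, Fin (i.val + 1)) (i : ℕ) (h : i + 1 < n) :
    (toPath q ⟨i+1, h⟩).1 = decide ((q ⟨i+1, h⟩).val ≤ (q ⟨i, Nat.lt_of_succ_lt h⟩).val) := by
  rw [toPath_succ]
  split <;> simp_all

lemma isLPath_toPath (q : ∀ i : Fin n, Fin (i.val + 1)) : IsLPath n (toPath q) := by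
  refine ⟨?_, ?_, ?_⟩
  · intro i
    rw [toPath_snd]
    have := Fin.is_le (q i)
    split <;> omega
  · intro h; rw [toPath_zero]; exact ⟨rfl, rfl⟩
  · intro i h
    set a := (q ⟨i, Nat.lt_of_succ_lt h⟩).val with ha
    set b := (q ⟨i+1, h⟩).val with hb
    have hai : a ≤ i := Fin.is_le _
    have hbi : b ≤ i + 1 := Fin.is_le _
    have h2 : (toPath q ⟨i+1, h⟩).2 = if (toPath q ⟨i+1, h⟩).1 then b + 1 else i + 2 - b := by
      rw [toPath_snd]
    have h1 : (toPath q ⟨i, Nat.lt_of_succ_lt h⟩).2 =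
        if (toPath q ⟨i, Nat.lt_of_succ_lt h⟩).1 then a + 1 else i + 1 - a := by
      rw [toPath_snd]
    have hf : (toPath q ⟨i+1, h⟩).1 = decide (b ≤ a) := toPath_fst_succ q i h
    constructor
    · intro hpar
      rw [h1, h2, hpar, hf]
      by_cases hba : b ≤ a
      · simp only [hba, decide_eq_true_eq, if_pos trivial]
        omega
      · rw [if_neg (by simpa using hba), if_neg (by simpa using hba)]
        omega
    · intro hperp
      rw [hf] at hperp
      rw [h1, h2, hf]
      by_cases hba : b ≤ a
      · have hd : (toPath q ⟨i, Nat.lt_of_succ_lt h⟩).1 = false := by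
          by_contra hc
          exact hperp (by simp [Bool.not_eq_false] at hc; simp [hc, hba])
        rw [hd, if_neg (by simp), if_pos (by simpa using hba)]
        omega
      · have hd : (toPath q ⟨i, Nat.lt_of_succ_lt h⟩).1 = true := by
          by_contra hc
          exact hperp (by simp [Bool.not_eq_true] at hc; simp [hc, hba])
        rw [hd, if_pos rfl, if_neg (by simpa using hba)]
        omega

lemma label_le {f : Fin n → Bool × ℕ} (hf : IsLPath n f) (i : Fin n) :
    (f i).2 ≤ i.val + 1 := by
  obtain ⟨hpos, hzero, hcond⟩ := hf
  rcases i with ⟨iv, hiv⟩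
  induction iv with
  | zero => exact le_of_eq ((hzero hiv).2)
  | succ m ih =>
    have hm : m < n := Nat.lt_of_succ_lt hiv
    have ihm : (f ⟨m, hm⟩).2 ≤ m + 1 := ih hm
    have hc := hcond m hiv
    show (f ⟨m+1, hiv⟩).2 ≤ m + 1 + 1
    by_cases hpar : (f ⟨m, hm⟩).1 = (f ⟨m+1, hiv⟩).1
    · have := hc.1 hpar
      omega
    · have := hc.2 hpar
      have := hpos ⟨m, hm⟩
      omega

/-- Recover the rank code from a labeled lattice path. -/
def fromPath (f : Fin n → Bool × ℕ) (i : Fin n) : ℕ :=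
  if (f i).1 then (f i).2 - 1 else i.val + 1 - (f i).2

lemma fromPath_le {f : Fin n → Bool × ℕ} (hf : IsLPath n f) (i : Fin n) :
    fromPath f i ≤ i.val := by
  have h1 := label_le hf i
  have h2 := hf.1 i
  unfold fromPath
  split <;> omega

lemma fromPath_toPath (q : ∀ i : Fin n, Fin (i.val + 1)) (i : Fin n) :
    fromPath (toPath q) i = (q i).val := by
  have hq := Fin.is_le (q i)
  unfold fromPath
  rw [toPath_snd]
  rcases i with ⟨iv, hiv⟩
  match iv with
  | 0 =>
    have h0 : (q ⟨0, hiv⟩).val = 0 := Nat.le_zero.1 (Fin.is_le _)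
    rw [toPath_zero]
    simpa using h0.symm
  | m + 1 =>
    rw [toPath_fst_succ]
    split <;> omega

lemma toPath_fromPath {f : Fin n → Bool × ℕ} (hf : IsLPath n f)
    (q : ∀ i : Fin n, Fin (i.val + 1)) (hq : ∀ i, (q i).val = fromPath f i) :
    toPath q = f := by
  obtain ⟨hpos, hzero, hcond⟩ := hf
  funext i
  rcases i with ⟨iv, hiv⟩
  induction iv with
  | zero =>
    rw [toPath_zero]
    exact Prod.ext ((hzero hiv).1).symm ((hzero hiv).2).symm
  | succ m _ =>
    have hm : m < n := Nat.lt_of_succ_lt hiv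
    have hl1 := label_le ⟨hpos, hzero, hcond⟩ ⟨m, hm⟩
    have hl2 := label_le ⟨hpos, hzero, hcond⟩ ⟨m+1, hiv⟩
    have hp1 := hpos ⟨m, hm⟩
    have hp2 := hpos ⟨m+1, hiv⟩
    simp only at hl1 hl2
    have hqm := hq ⟨m, hm⟩
    have hqm1 := hq ⟨m+1, hiv⟩
    have hc := hcond m hiv
    rw [toPath_succ]
    -- case on the directions of f at m and m+1
    cases hd1 : (f ⟨m, hm⟩).1 <;> cases hd2 : (f ⟨m+1, hiv⟩).1
    · -- both horizontal: ascent; q m+1 > q m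
      have hle := hc.1 (by rw [hd1, hd2])
      rw [if_neg, Prod.mk.injEq]
      · refine ⟨hd2.symm, ?_⟩
        unfold fromPath at hqm1
        rw [hd2] at hqm1
        simp only [if_false, Bool.false_eq_true] at hqm1
        omega
      · unfold fromPath at hqm hqm1
        rw [hd1] at hqm; rw [hd2] at hqm1
        simp only [if_false, Bool.false_eq_true] at hqm hqm1
        omega
    · -- m horizontal, m+1 vertical: descent; q m+1 ≤ q m
      have hle := hc.2 (by rw [hd1, hd2]; simp)
      unfold fromPath at hqm hqm1
      rw [hd1] at hqm; rw [hd2] at hqm1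
      simp only [if_false, if_true, Bool.false_eq_true] at hqm hqm1
      rw [if_pos (by omega), Prod.mk.injEq]
      exact ⟨hd2.symm, by omega⟩
    · -- m vertical, m+1 horizontal: ascent
      have hle := hc.2 (by rw [hd1, hd2]; simp)
      unfold fromPath at hqm hqm1
      rw [hd1] at hqm; rw [hd2] at hqm1
      simp only [if_false, if_true, Bool.false_eq_true] at hqm hqm1
      rw [if_neg (by omega), Prod.mk.injEq]
      exact ⟨hd2.symm, by omega⟩
    · -- both vertical: descent
      have hle := hc.1 (by rw [hd1, hd2])
      unfold fromPath at hqm hqm1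
      rw [hd1] at hqm; rw [hd2] at hqm1
      simp only [if_true] at hqm hqm1
      rw [if_pos (by omega), Prod.mk.injEq]
      exact ⟨hd2.symm, by omega⟩

noncomputable def pathEquiv (n : ℕ) :
    (∀ i : Fin n, Fin (i.val + 1)) ≃ {f : Fin n → Bool × ℕ // IsLPath n f} :=
  Equiv.ofBijective (fun q => ⟨toPath q, isLPath_toPath q⟩)
    ⟨fun q q' h => by
      funext i
      have h1 := fromPath_toPath q i
      have h2 := fromPath_toPath q' i
      have h3 : toPath q = toPath q' := congrArg Subtype.val h
      rw [h3] at h1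
      exact Fin.ext (h1 ▸ h2 ▸ rfl),
    fun ⟨f, hf⟩ => ⟨fun i => ⟨fromPath f i, Nat.lt_succ_of_le (fromPath_le hf i)⟩,
      Subtype.ext (toPath_fromPath hf _ (fun i => rfl))⟩⟩

lemma descent_iff_vert (p : Equiv.Perm (Fin n)) (i : ℕ) (h : i + 1 < n) :
    (p ⟨i+1, h⟩ < p ⟨i, Nat.lt_of_succ_lt h⟩ ↔
      (toPath (codeMap p) ⟨i+1, h⟩).1 = true) := by
  rw [toPath_fst_succ]
  rw [descent_iff p ⟨i, Nat.lt_of_succ_lt h⟩ ⟨i+1, h⟩ rfl]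
  have h1 := rk_pos p ⟨i, Nat.lt_of_succ_lt h⟩
  have h2 := rk_pos p ⟨i+1, h⟩
  simp only [codeMap, decide_eq_true_eq, Fin.val_mk]
  exact ⟨fun hh => decide_eq_true (by omega), fun hh => by have := of_decide_eq_true hh; omega⟩

lemma counts_eq (p : Equiv.Perm (Fin n)) :
    numDescents n p = vertCount n (toPath (codeMap p)) := by
  unfold numDescents vertCount
  refine Finset.card_bij' (fun a ha => (⟨a + 1, by simp only [Finset.mem_filter, Finset.mem_range] at ha; omega⟩ : Fin n))
    (fun b _ => b.val - 1) ?_ ?_ ?_ ?_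
  · intro a ha
    simp only [Finset.mem_filter, Finset.mem_range, Finset.mem_univ, true_and] at ha ⊢
    obtain ⟨har, hd⟩ := ha
    have h : a + 1 < n := by omega
    rw [permVal, permVal] at hd
    rw [dif_pos h, dif_pos (Nat.lt_of_succ_lt h)] at hd
    exact (descent_iff_vert p a h).1 (by exact_mod_cast hd)
  · intro b hb
    simp only [Finset.mem_filter, Finset.mem_univ, true_and, Finset.mem_range] at hb ⊢
    have hb0 : b.val ≠ 0 := by
      intro h0
      have : b = ⟨0, by omega⟩ := Fin.ext h0
      rw [this, toPath_zero] at hb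
      simp at hb
    have hbn : b.val < n := b.isLt
    refine ⟨by omega, ?_⟩
    have h : (b.val - 1) + 1 < n := by omega
    rw [permVal, permVal, dif_pos h, dif_pos (Nat.lt_of_succ_lt h)]
    have hbe : (⟨b.val - 1 + 1, h⟩ : Fin n) = b := Fin.ext (show b.val - 1 + 1 = b.val by omega)
    have := (descent_iff_vert p (b.val - 1) h).2 (by rw [hbe]; exact hb)
    exact_mod_cast this
  · intro a ha
    simp
  · intro b hb
    simp only [Finset.mem_filter, Finset.mem_univ, true_and] at hb
    have hb0 : b.val ≠ 0 := by
      intro h0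
      have : b = ⟨0, by omega⟩ := Fin.ext h0
      rw [this, toPath_zero] at hb
      simp at hb
    exact Fin.ext (by simp only [Fin.val_mk]; omega)


/-- there is a bijection between permutations of `{1,...,n}` and labeled
northeastern lattice paths in `𝒫(n)`, under which permutations with exactly `k` descents
correspond to paths with exactly `k` vertical edges. -/
theorem stmt7 (n : ℕ) :
    ∃ e : Equiv.Perm (Fin n) ≃ {f : Fin n → Bool × ℕ // IsLPath n f},
      ∀ p : Equiv.Perm (Fin n), numDescents n p = vertCount n (e p).1 := by
  refine ⟨(Equiv.ofBijective codeMap codeMap_bijective).trans (pathEquiv n), ?_⟩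
  intro p
  exact counts_eq p
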